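/- arXiv:2011.09532 — 6 statements merged into one kernel-verified Lean document; each statement's English description precedes it below -/
import Mathlib

section
/- Let (x_n) be a sequence of positive reals such that (1/n)·∑_{j=1}^n x_j → ∞ as n → ∞. Then ∑_{j=1}^n max(log x_j, 0) = o(∑_{j=1}^n x_j) as n → ∞. -/
open Filter Asymptotics

theorem cesaro_logplus_littleO (x : ℕ → ℝ) (hx : ∀ n, 0 < x n)
    (h : Tendsto (fun n => (∑ j ∈ Finset.Icc 1 n, x j) / (n : ℝ)) atTop atTop) :
    (fun n => ∑ j ∈ Finset.Icc 1 n, max (Real.log (x j)) 0)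
      =o[atTop] (fun n => ∑ j ∈ Finset.Icc 1 n, x j) := by
  rw [isLittleO_iff]
  intro c hc
  set M : ℝ := max (2 / c) 1 with hMdef
  have hM1 : (1:ℝ) ≤ M := le_max_right _ _
  have hM0 : (0:ℝ) < M := lt_of_lt_of_le one_pos hM1
  have hlogM : 0 ≤ Real.log M := Real.log_nonneg hM1
  have hMc : 1 / M ≤ c / 2 := by
    have h2c : (0:ℝ) < 2 / c := by positivity
    have : 1 / M ≤ 1 / (2 / c) := one_div_le_one_div_of_le h2c (le_max_left _ _)
    rwa [one_div_div] at this
  have key : ∀ t : ℝ, 0 < t → max (Real.log t) 0 ≤ Real.log M + t / M := by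
    intro t ht
    have h1 : Real.log t ≤ Real.log M + t / M := by
      have h2 := Real.log_le_sub_one_of_pos (div_pos ht hM0)
      have hd : Real.log (t / M) = Real.log t - Real.log M :=
        Real.log_div ht.ne' hM0.ne'
      linarith
    exact max_le h1 (add_nonneg hlogM (div_nonneg ht.le hM0.le))
  have hsum : ∀ n : ℕ, ∑ j ∈ Finset.Icc 1 n, max (Real.log (x j)) 0
      ≤ n * Real.log M + (∑ j ∈ Finset.Icc 1 n, x j) / M := by
    intro n
    calc ∑ j ∈ Finset.Icc 1 n, max (Real.log (x j)) 0
        ≤ ∑ j ∈ Finset.Icc 1 n, (Real.log M + x j / M) :=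
          Finset.sum_le_sum fun j _ => key _ (hx j)
      _ = n * Real.log M + (∑ j ∈ Finset.Icc 1 n, x j) / M := by
          rw [Finset.sum_add_distrib, Finset.sum_const, Finset.sum_div, Nat.card_Icc]
          simp [nsmul_eq_mul]
  have hc2 : (0:ℝ) < c / 2 := by positivity
  filter_upwards [h.eventually_ge_atTop ((2 / c) * Real.log M),
    eventually_ge_atTop 1] with n hn hn1
  set S := ∑ j ∈ Finset.Icc 1 n, x j with hSdef
  have hS0 : 0 ≤ S := Finset.sum_nonneg fun j _ => (hx j).le
  have hn0 : (0:ℝ) < (n:ℝ) := by exact_mod_cast hn1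
  have hSn : (2 / c) * Real.log M * (n:ℝ) ≤ S := (le_div_iff₀ hn0).mp hn
  have h3 : (n:ℝ) * Real.log M ≤ (c / 2) * S := by
    have h4 := mul_le_mul_of_nonneg_left hSn hc2.le
    have h5 : (c / 2) * ((2 / c) * Real.log M * (n:ℝ)) = (n:ℝ) * Real.log M := by
      field_simp
    linarith
  have h6 : S / M ≤ (c / 2) * S := by
    have := mul_le_mul_of_nonneg_right hMc hS0
    calc S / M = (1 / M) * S := by ring
      _ ≤ (c / 2) * S := this
  have hL0 : 0 ≤ ∑ j ∈ Finset.Icc 1 n, max (Real.log (x j)) 0 :=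
    Finset.sum_nonneg fun j _ => le_max_right _ _
  simp only [Real.norm_eq_abs]
  rw [abs_of_nonneg hL0, abs_of_nonneg hS0]
  have := hsum n
  linarith
end

section
/- Let U be a positive harmonic function on the right half-plane {z : Re z > 0} admitting the representation U(z) = c·x + (x/π)·∫_{−∞}^{∞} U(it)/|z − it|² dt for x = Re z > 0, where c ≥ 0 and U(it) ≥ 0 for all real t. Then the function x ↦ U(x)/x is antitone on (0, ∞). -/
open MeasureTheory

theorem poisson_rep_div_antitone (U : ℂ → ℝ) (c : ℝ) (g : ℝ → ℝ)
    (hc : 0 ≤ c) (hg : ∀ t, 0 ≤ g t)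
    (hU : ∀ z : ℂ, 0 < z.re →
      U z = c * z.re + (z.re / Real.pi) * ∫ t : ℝ, g t / ‖z - t * Complex.I‖ ^ 2)
    (hint : ∀ z : ℂ, 0 < z.re →
      Integrable (fun t : ℝ => g t / ‖z - t * Complex.I‖ ^ 2))
    (hUpos : ∀ z : ℂ, 0 < z.re → 0 < U z) :
    AntitoneOn (fun x : ℝ => U x / x) (Set.Ioi (0 : ℝ)) := by
  have hπ : 0 < Real.pi := Real.pi_pos
  have habs : ∀ x t : ℝ, ‖(x : ℂ) - t * Complex.I‖ ^ 2 = x ^ 2 + t ^ 2 := by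
    intro x t
    rw [← Complex.normSq_eq_norm_sq]
    simp [Complex.normSq_apply]
    ring
  have key : ∀ x : ℝ, 0 < x →
      U x / x = c + (1 / Real.pi) * ∫ t : ℝ, g t / (x ^ 2 + t ^ 2) := by
    intro x hx
    have hre : (x : ℂ).re = x := Complex.ofReal_re x
    rw [hU x (by rwa [hre]), hre]
    simp only [habs]
    field_simp
  intro a ha b hb hab
  simp only [Set.mem_Ioi] at ha hb
  have ia : Integrable (fun t : ℝ => g t / (a ^ 2 + t ^ 2)) := by
    have := hint a (by simpa using ha)
    simpa [habs] using this
  have ib : Integrable (fun t : ℝ => g t / (b ^ 2 + t ^ 2)) := by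
    have := hint b (by simpa using hb)
    simpa [habs] using this
  have hmono : (∫ t : ℝ, g t / (b ^ 2 + t ^ 2)) ≤ ∫ t : ℝ, g t / (a ^ 2 + t ^ 2) := by
    apply integral_mono ib ia
    intro t
    have h1 : (0:ℝ) < a ^ 2 + t ^ 2 := by positivity
    have h2 : a ^ 2 + t ^ 2 ≤ b ^ 2 + t ^ 2 := by nlinarith
    dsimp only
    exact div_le_div_of_nonneg_left (hg t) h1 h2
  simp only
  rw [key a ha, key b hb]
  have : (1 / Real.pi) * ∫ t : ℝ, g t / (b ^ 2 + t ^ 2)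
      ≤ (1 / Real.pi) * ∫ t : ℝ, g t / (a ^ 2 + t ^ 2) := by
    apply mul_le_mul_of_nonneg_left hmono (by positivity)
  linarith
end

section
/- Let z = x + iy with x < 0, |y| < 1/2, and suppose a, b are positive reals with b < |z|²/|x| < a, |z + b| > 1, |z + a| > 1, and |z| > b. Then |1 + z/b| ≥ 1/|z| and |1 + z/a| ≥ 1/(2|z|). -/
lemma omega_aux (R A a : ℝ) (hR1 : 1 < R) (htri : a - R ≤ A) (h : 2 * R < a) :
    1 * a ≤ A * (2 * R) := by nlinarith

theorem omega_n_estimates (z : ℂ) (a b : ℝ)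
    (hx : z.re < 0) (hy : |z.im| < 1 / 2)
    (hb : 0 < b) (ha : 0 < a)
    (hmid : b < ‖z‖ ^ 2 / |z.re| ∧ ‖z‖ ^ 2 / |z.re| < a)
    (hzb : 1 < ‖z + b‖) (hza : 1 < ‖z + a‖)
    (hzgtb : b < ‖z‖) :
    1 / ‖z‖ ≤ ‖1 + z / b‖ ∧
      1 / (2 * ‖z‖) ≤ ‖1 + z / a‖ := by
  set x := z.re with hxdef
  set y := z.im with hydef
  set R := ‖z‖ with hR
  set B := ‖z + b‖ with hB
  set A := ‖z + a‖ with hA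
  have hR0 : 0 < R := lt_trans hb hzgtb
  have hRsq : R ^ 2 = x ^ 2 + y ^ 2 := by
    rw [hR, Complex.sq_norm, Complex.normSq_apply]; ring
  have hBsq : B ^ 2 = (x + b) ^ 2 + y ^ 2 := by
    rw [hB, Complex.sq_norm, Complex.normSq_apply]
    simp [Complex.add_re, Complex.add_im]
    ring
  have hy2 : y ^ 2 < 1 / 4 := by nlinarith [abs_nonneg y, sq_abs y, hy]
  have hbR : b ^ 2 < R ^ 2 := by nlinarith
  have hB2 : 1 < B ^ 2 := by nlinarith [hB ▸ (norm_nonneg (z + b))]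
  -- x + b < 0
  have hxb : x + b < 0 := by
    by_contra h
    push_neg at h
    nlinarith [sq_nonneg (x + b)]
  -- R > 1
  have hR1 : 1 < R := by
    have hx2 : 1 - y ^ 2 < x ^ 2 := by nlinarith
    nlinarith
  -- abs (1 + z/b) = B / b
  have hbne : (b : ℂ) ≠ 0 := by exact_mod_cast hb.ne'
  have hane : (a : ℂ) ≠ 0 := by exact_mod_cast ha.ne'
  have e1 : ‖1 + z / b‖ = B / b := by
    have : (1 : ℂ) + z / b = (z + b) / b := by field_simp; ring
    rw [this, norm_div, Complex.norm_real, Real.norm_eq_abs, abs_of_pos hb]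
  have e2 : ‖1 + z / a‖ = A / a := by
    have : (1 : ℂ) + z / a = (z + a) / a := by field_simp; ring
    rw [this, norm_div, Complex.norm_real, Real.norm_eq_abs, abs_of_pos ha]
  constructor
  · rw [e1, div_le_div_iff₀ hR0 hb]
    have h1 : b * 1 < R * B := mul_lt_mul hzgtb hzb.le one_pos hR0.le
    linarith
  · rw [e2, div_le_div_iff₀ (by positivity) ha]
    -- need a ≤ 2 R A, i.e. 1 * a ≤ A * (2 * R)
    have htri : a - R ≤ A := by
      have h1 : ‖((a : ℂ))‖ ≤ ‖z + a‖ + ‖-z‖ := by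
        calc ‖((a : ℂ))‖ = ‖(z + a) + (-z)‖ := by ring_nf
          _ ≤ _ := norm_add_le _ _
      simp [Complex.norm_real, abs_of_pos ha] at h1
      have h1' : a ≤ A + R := h1
      linarith
    rcases le_or_gt a (2 * R) with h | h
    · have h2 : 2 * R < 2 * R * A := lt_mul_of_one_lt_right (by positivity) hza
      linarith
    · exact omega_aux R A a hR1 htri h
end

section
/- Let u be a positive harmonic function on the annulus {z : r₁ < |z| < r₂} where 0 < r₁ < s₁ ≤ s₂ < r₂. Then there is a positive constant K, depending only on μ := min{log(s₁/r₁), log(r₂/s₂)}, such that u(z') ≤ K·u(z) whenever |z'| = |z| and s₁ ≤ |z| ≤ s₂. -/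
open Complex Metric Set

set_option maxHeartbeats 1000000


/-- `u` is harmonic on `s`: twice continuously differentiable (on a neighbourhood of each
point of `s`) with vanishing Laplacian at each point of `s`. -/
def HarmonicOnSet (u : ℂ → ℝ) (s : Set ℂ) : Prop :=
  ContDiffOn ℝ 2 u s ∧ ∀ z ∈ s,
    fderiv ℝ (fun w => fderiv ℝ u w 1) z 1 +
      fderiv ℝ (fun w => fderiv ℝ u w Complex.I) z Complex.I = 0

open Complex Metric Set

lemma clm_ext_complex {T S : ℂ →L[ℝ] ℝ} (h1 : T 1 = S 1) (hI : T Complex.I = S Complex.I) :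
    T = S := by
  ext1 h
  have hh : (h : ℂ) = h.re • (1 : ℂ) + h.im • Complex.I := by
    simp [Complex.real_smul, Complex.re_add_im]
  rw [hh, map_add, map_add, map_smul, map_smul, map_smul, map_smul, h1, hI]

lemma harmonic_deriv_holo {u : ℂ → ℝ} {s : Set ℂ} (hs : IsOpen s) (hu : HarmonicOnSet u s) :
    ∀ z ∈ s, HasDerivAt (fun w => ((fderiv ℝ u w 1 : ℝ) : ℂ) - Complex.I * (fderiv ℝ u w Complex.I : ℝ))
      (((fderiv ℝ (fderiv ℝ u) z 1 1 : ℝ) : ℂ) - Complex.I * (fderiv ℝ (fderiv ℝ u) z 1 Complex.I : ℝ)) z := by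
  obtain ⟨hC2, hΔ⟩ := hu
  have h2 : ContDiffOn ℝ (1 + 1) u s := by norm_num; exact hC2
  rw [contDiffOn_succ_iff_fderiv_of_isOpen hs] at h2
  have hdu : DifferentiableOn ℝ (fderiv ℝ u) s := h2.2.2.differentiableOn one_ne_zero
  intro z hz
  have hBz : DifferentiableAt ℝ (fderiv ℝ u) z := (hdu z hz).differentiableAt (hs.mem_nhds hz)
  set B := fderiv ℝ (fderiv ℝ u) z with hBdef
  have hB : HasFDerivAt (fderiv ℝ u) B z := hBz.hasFDerivAt
  -- symmetry of second derivative
  have hsymm : ∀ v w : ℂ, B v w = B w v := by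
    intro v w
    refine second_derivative_symmetric_of_eventually_of_real (f := u) ?_ hB v w
    filter_upwards [hs.mem_nhds hz] with y hy
    exact ((hC2.differentiableOn (by norm_num) y hy).differentiableAt (hs.mem_nhds hy)).hasFDerivAt
  -- the Laplacian condition in terms of B
  have hlap : B 1 1 + B Complex.I Complex.I = 0 := by
    have e1 : HasFDerivAt (fun w => fderiv ℝ u w (1:ℂ))
        ((ContinuousLinearMap.apply ℝ ℝ (1:ℂ)).comp B) z :=
      (ContinuousLinearMap.apply ℝ ℝ (1:ℂ)).hasFDerivAt.comp z hB
    have e2 : HasFDerivAt (fun w => fderiv ℝ u w Complex.I)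
        ((ContinuousLinearMap.apply ℝ ℝ Complex.I).comp B) z :=
      (ContinuousLinearMap.apply ℝ ℝ Complex.I).hasFDerivAt.comp z hB
    have := hΔ z hz
    rw [e1.fderiv, e2.fderiv] at this
    simpa using this
  -- real derivative of g
  set c₁ := ContinuousLinearMap.apply ℝ ℝ (1:ℂ) with hc₁
  set c₂ := ContinuousLinearMap.apply ℝ ℝ (Complex.I) with hc₂
  have h₁ : HasFDerivAt (fun w => ((fderiv ℝ u w 1 : ℝ) : ℂ))
      (Complex.ofRealCLM.comp (c₁.comp B)) z :=
    Complex.ofRealCLM.hasFDerivAt.comp z (c₁.hasFDerivAt.comp z hB)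
  have h₂ : HasFDerivAt (fun w => ((fderiv ℝ u w Complex.I : ℝ) : ℂ))
      (Complex.ofRealCLM.comp (c₂.comp B)) z :=
    Complex.ofRealCLM.hasFDerivAt.comp z (c₂.hasFDerivAt.comp z hB)
  have hg : HasFDerivAt
      (fun w => ((fderiv ℝ u w 1 : ℝ) : ℂ) - Complex.I * (fderiv ℝ u w Complex.I : ℝ))
      (Complex.ofRealCLM.comp (c₁.comp B) - Complex.I • Complex.ofRealCLM.comp (c₂.comp B)) z := by
    simpa [smul_eq_mul] using h₁.fun_sub (h₂.const_mul Complex.I)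
  set d : ℂ := ((B 1 1 : ℝ) : ℂ) - Complex.I * (B 1 Complex.I : ℝ) with hd
  rw [hasDerivAt_iff_hasFDerivAt]
  refine hasFDerivAt_of_restrictScalars ℝ hg ?_
  ext1 h
  have hh : (h : ℂ) = h.re • (1 : ℂ) + h.im • Complex.I := by
    simp [Complex.real_smul, Complex.re_add_im]
  have hBI1 : B Complex.I 1 = B 1 Complex.I := hsymm _ _
  have hBII : B Complex.I Complex.I = - B 1 1 := by linarith [hlap]
  simp only [ContinuousLinearMap.coe_restrictScalars', ContinuousLinearMap.smulRight_apply,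
    ContinuousLinearMap.one_apply, ContinuousLinearMap.coe_sub', Pi.sub_apply,
    ContinuousLinearMap.coe_smul', Pi.smul_apply, ContinuousLinearMap.coe_comp',
    Function.comp_apply]
  rw [hh]
  simp only [map_add, map_smul]
  simp only [ContinuousLinearMap.coe_comp', Function.comp_apply, hc₁, hc₂,
    ContinuousLinearMap.apply_apply]
  rw [hBI1, hBII]
  simp only [Complex.ofRealCLM_apply, smul_eq_mul, Complex.ofReal_neg, Complex.real_smul,
    ContinuousLinearMap.toSpanSingleton_apply, hd]
  linear_combination (-(h.im:ℂ) * ((B 1) Complex.I)) * Complex.I_sq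


lemma exists_primitive {g : ℂ → ℂ} {c : ℂ} {R r : ℝ} (hr : 0 < r) (hrR : r < R)
    (hg : DifferentiableOn ℂ g (ball c R)) :
    ∃ F : ℂ → ℂ, ∀ z ∈ ball c r, HasDerivAt F (g z) z := by
  set r' : ℝ := (r + R) / 2 with hr'
  have hrr' : r < r' := by simp [hr']; linarith
  have hr'R : r' < R := by simp [hr']; linarith
  have hr'0 : 0 < r' := hr.trans hrr'
  set t : NNReal := ⟨r', hr'0.le⟩ with ht
  have hball : (ball c (t : ℝ)) = ball c r' := rfl
  have hdc : DiffContOnCl ℂ g (ball c (t : ℝ)) := by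
    refine ⟨hg.mono (ball_subset_ball hr'R.le), ?_⟩
    rw [hball, closure_ball c hr'0.ne']
    exact hg.continuousOn.mono (closedBall_subset_ball hr'R)
  have hp : HasFPowerSeriesOnBall g (cauchyPowerSeries g c t) c t :=
    hdc.hasFPowerSeriesOnBall (by exact_mod_cast hr'0)
  set p := cauchyPowerSeries g c t with hpdef
  set a : ℕ → ℂ := fun n => p.coeff n with ha
  -- summable bound
  have hsum : Summable (fun n => ‖a n‖ * r ^ n) := by
    have hlt : ((Real.toNNReal r : NNReal) : ENNReal) < p.radius := by
      refine lt_of_lt_of_le ?_ hp.r_le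
      rw [ENNReal.coe_lt_coe, ← NNReal.coe_lt_coe, Real.coe_toNNReal _ hr.le]
      exact hrr'
    have := p.summable_norm_mul_pow hlt
    simpa only [FormalMultilinearSeries.norm_apply_eq_norm_coef,
      Real.coe_toNNReal _ hr.le] using this
  set fn : ℕ → ℂ → ℂ := fun n z => (a n / ((n : ℂ) + 1)) * (z - c) ^ (n + 1) with hfn
  set fn' : ℕ → ℂ → ℂ := fun n z => a n * (z - c) ^ n with hfn'
  have hder : ∀ n y, y ∈ ball c r → HasDerivAt (fn n) (fn' n y) y := by
    intro n y _
    have h1 : HasDerivAt (fun z : ℂ => (z - c) ^ (n + 1))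
        (((n : ℂ) + 1) * (y - c) ^ n) y := by
      simpa using ((hasDerivAt_id y).sub_const c).fun_pow (n + 1)
    have := h1.const_mul (a n / ((n : ℂ) + 1))
    refine this.congr_deriv ?_
    have hne : ((n:ℂ)+1) ≠ 0 := Nat.cast_add_one_ne_zero n
    simp only [hfn']
    field_simp
  have hbound : ∀ n y, y ∈ ball c r → ‖fn' n y‖ ≤ ‖a n‖ * r ^ n := by
    intro n y hy
    rw [mem_ball, dist_eq_norm] at hy
    simp only [hfn', norm_mul, norm_pow]
    gcongr

  have hsum0 : Summable fun n => fn n c := by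
    have : (fun n => fn n c) = fun _ => (0 : ℂ) := by
      funext n; simp [hfn]
    rw [this]
    exact summable_zero
  have key : ∀ z ∈ ball c r, HasDerivAt (fun w => ∑' n, fn n w) (∑' n, fn' n z) z := by
    intro z hz
    exact hasDerivAt_tsum_of_isPreconnected hsum isOpen_ball (convex_ball c r).isPreconnected
      hder hbound (mem_ball_self hr) hsum0 hz
  refine ⟨fun w => ∑' n, fn n w, fun z hz => ?_⟩
  have hsumg : ∑' n, fn' n z = g z := by
    have hw : z - c ∈ Metric.eball (0 : ℂ) (t : ENNReal) := by
      rw [Metric.mem_eball, edist_zero_right]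
      have : ‖z - c‖ < r' := by
        rw [mem_ball, dist_eq_norm] at hz; exact hz.trans hrr'
      exact_mod_cast (by exact_mod_cast this : ‖z - c‖₊ < t)
    have := (hp.hasSum hw).tsum_eq
    simp only [add_sub_cancel] at this
    rw [← this]
    congr 1
    ext n
    rw [p.apply_eq_pow_smul_coeff, smul_eq_mul, hfn']
    ring
  rw [← hsumg]
  exact key z hz

lemma harmonicOnSet_mono {u : ℂ → ℝ} {s t : Set ℂ} (h : HarmonicOnSet u s) (hts : t ⊆ s) :
    HarmonicOnSet u t :=
  ⟨h.1.mono hts, fun z hz => h.2 z (hts hz)⟩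

lemma harnack_ball {u : ℂ → ℝ} {c : ℂ} {R : ℝ} (hR : 0 < R)
    (hu : HarmonicOnSet u (ball c R)) (hpos : ∀ z ∈ ball c R, 0 < u z) :
    ∀ z : ℂ, dist z c ≤ R / 2 → u z ≤ 5 * u c := by
  intro z hzc
  set g : ℂ → ℂ := fun w => ((fderiv ℝ u w 1 : ℝ) : ℂ) - Complex.I * (fderiv ℝ u w Complex.I : ℝ)
    with hgdef
  have hgd : ∀ w ∈ ball c R, HasDerivAt g _ w := harmonic_deriv_holo isOpen_ball hu
  have hgdiff : DifferentiableOn ℂ g (ball c R) := fun w hw =>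
    ((hgd w hw).differentiableAt).differentiableWithinAt
  set r : ℝ := 3 * R / 4 with hrdef
  have hr0 : 0 < r := by positivity
  have hrR : r < R := by linarith
  obtain ⟨F, hF⟩ := exists_primitive hr0 hrR hgdiff
  have hrsub : ball c r ⊆ ball c R := ball_subset_ball hrR.le
  -- u - Re F is constant on ball c r
  have huF : ∀ w ∈ ball c r, u w - (F w).re = u c - (F c).re := by
    have hd0 : ∀ w ∈ ball c r, HasFDerivAt (fun x => u x - (F x).re) (0 : ℂ →L[ℝ] ℝ) w := by
      intro w hw
      have hFre : HasFDerivAt (fun x => (F x).re)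
          (Complex.reCLM.comp ((ContinuousLinearMap.smulRight (1 : ℂ →L[ℂ] ℂ) (g w)).restrictScalars ℝ)) w :=
        Complex.reCLM.hasFDerivAt.comp w
          (((hF w hw).hasFDerivAt).restrictScalars ℝ)
      have hud : HasFDerivAt u (fderiv ℝ u w) w := by
        have := (hu.1.differentiableOn (by norm_num) w (hrsub hw)).differentiableAt
          (isOpen_ball.mem_nhds (hrsub hw))
        exact this.hasFDerivAt
      have heq : Complex.reCLM.comp ((ContinuousLinearMap.smulRight (1 : ℂ →L[ℂ] ℂ) (g w)).restrictScalars ℝ)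
          = fderiv ℝ u w := by
        apply clm_ext_complex <;>
          simp [hgdef, Complex.ext_iff, Complex.I_mul_I] <;> ring_nf <;> simp
      rw [heq] at hFre
      simpa using hud.fun_sub hFre
    intro w hw
    refine Convex.is_const_of_fderivWithin_eq_zero (𝕜 := ℝ) (convex_ball c r)
      (fun x hx => ((hd0 x hx).differentiableAt.differentiableWithinAt)) ?_ hw (mem_ball_self hr0)
    intro x hx
    rw [((hd0 x hx).hasFDerivWithinAt).fderivWithin (isOpen_ball.uniqueDiffOn x hx)]
  set b : ℝ := u c with hbdef
  have hb : 0 < b := hpos c (mem_ball_self hR)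
  set G : ℂ → ℂ := fun w => F w + ((b : ℂ) - F c) with hGdef
  have hGre : ∀ w ∈ ball c r, (G w).re = u w := by
    intro w hw
    have := huF w hw
    simp only [hGdef, Complex.add_re, Complex.sub_re, Complex.ofReal_re]
    linarith
  have hGd : ∀ w ∈ ball c r, HasDerivAt G (g w) w := fun w hw =>
    (hF w hw).add_const _
  have hden : ∀ w ∈ ball c r, G w + (b : ℂ) ≠ 0 := by
    intro w hw h0
    have : (G w + (b : ℂ)).re = 0 := by rw [h0]; simp
    rw [Complex.add_re, hGre w hw, Complex.ofReal_re] at this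
    have := hpos w (hrsub hw)
    linarith
  set φ : ℂ → ℂ := fun w => (G w - (b : ℂ)) / (G w + (b : ℂ)) with hφdef
  have hφc : φ c = 0 := by
    have : G c = (b : ℂ) := by simp [hGdef]
    simp [hφdef, this]
  have hφd : DifferentiableOn ℂ φ (ball c r) := by
    apply DifferentiableOn.div
    · exact fun w hw => (((hGd w hw).differentiableAt).sub_const _).differentiableWithinAt
    · exact fun w hw => (((hGd w hw).differentiableAt).add_const _).differentiableWithinAt
    · exact hden
  have hmaps : Set.MapsTo φ (ball c r) (ball (φ c) 1) := by
    rw [hφc]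
    intro w hw
    rw [mem_ball, dist_zero_right, hφdef]
    have hure : 0 < (G w).re := by rw [hGre w hw]; exact hpos w (hrsub hw)
    have habs : ‖G w - (b : ℂ)‖ < ‖G w + (b : ℂ)‖ := by
      have hsq : Complex.normSq (G w - (b : ℂ)) < Complex.normSq (G w + (b : ℂ)) := by
        simp only [Complex.normSq_apply, Complex.add_re, Complex.add_im, Complex.sub_re,
          Complex.sub_im, Complex.ofReal_re, Complex.ofReal_im, sub_zero, add_zero]
        nlinarith
      rw [Complex.norm_def, Complex.norm_def]
      exact Real.sqrt_lt_sqrt (Complex.normSq_nonneg _) hsq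
    rw [norm_div, div_lt_one (norm_pos_iff.2 (hden w hw))]
    exact habs
  have hzr : z ∈ ball c r := by
    rw [mem_ball]
    calc dist z c ≤ R / 2 := hzc
    _ < r := by rw [hrdef]; linarith
  have hschwarz := Complex.dist_le_div_mul_dist_of_mapsTo_ball hφd (hmaps.mono_right ball_subset_closedBall) hzr
  have hφz : ‖φ z‖ ≤ 2 / 3 := by
    have : dist (φ z) (φ c) ≤ 1 / r * dist z c := hschwarz
    rw [hφc, dist_zero_right] at this
    calc ‖φ z‖ = ‖φ z‖ := rfl
    _ ≤ 1 / r * dist z c := this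
    _ ≤ 1 / r * (R / 2) := by
        apply mul_le_mul_of_nonneg_left hzc
        positivity
    _ = 2 / 3 := by rw [hrdef]; field_simp; ring
  -- solve for G z
  set w : ℂ := φ z with hwdef
  have hGz : G z - (b : ℂ) = w * (G z + (b : ℂ)) := by
    rw [hwdef, hφdef]
    field_simp [hden z hzr]
  have h1w : ‖1 - w‖ ≥ 1 / 3 := by
    have := norm_sub_norm_le (1 : ℂ) w
    simp only [norm_one] at this
    calc (1:ℝ)/3 ≤ 1 - ‖w‖ := by
          have := hφz; linarith
    _ ≤ ‖(1:ℂ) - w‖ := this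
  have h2w : ‖1 + w‖ ≤ 5 / 3 := by
    calc ‖(1:ℂ) + w‖ ≤ ‖(1:ℂ)‖ + ‖w‖ := norm_add_le _ _
    _ ≤ 1 + 2/3 := by
        simp only [norm_one]
        have h' : ‖w‖ ≤ 2/3 := hφz
        linarith
    _ = 5/3 := by norm_num
  have hGsolve : G z * (1 - w) = (b : ℂ) * (1 + w) := by
    have := hGz; ring_nf at this ⊢; linear_combination this
  have habsG : ‖G z‖ * ‖1 - w‖ = b * ‖1 + w‖ := by
    have := congrArg norm hGsolve
    rwa [norm_mul, norm_mul, Complex.norm_real, Real.norm_of_nonneg hb.le] at this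
  have hGle : ‖G z‖ ≤ 5 * b := by
    have h3 : ‖G z‖ * (1/3) ≤ ‖G z‖ * ‖1 - w‖ := by
      apply mul_le_mul_of_nonneg_left h1w (norm_nonneg _)
    have h4 : b * ‖1 + w‖ ≤ b * (5/3) := by
      apply mul_le_mul_of_nonneg_left h2w hb.le
    nlinarith [norm_nonneg (G z)]
  calc u z = (G z).re := (hGre z hzr).symm
  _ ≤ ‖G z‖ := Complex.re_le_norm _
  _ ≤ 5 * b := hGle
  _ = 5 * u c := by rw [hbdef]

lemma harnack_step {r₁ r₂ : ℝ} {u : ℂ → ℝ} {δ ρ : ℝ}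
    (hδ : 0 < δ) (hρ : 0 < ρ)
    (hu : HarmonicOnSet u {z : ℂ | r₁ < ‖z‖ ∧ ‖z‖ < r₂})
    (hpos : ∀ z : ℂ, r₁ < ‖z‖ → ‖z‖ < r₂ → 0 < u z)
    (hball : ∀ w : ℂ, ‖w‖ = ρ →
      ball w (δ * ρ) ⊆ {z : ℂ | r₁ < ‖z‖ ∧ ‖z‖ < r₂}) :
    ∀ w w' : ℂ, ‖w‖ = ρ → ‖w'‖ = ρ → dist w' w ≤ δ * ρ / 2 →
      u w' ≤ 5 * u w := by
  intro w w' hw _ hd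
  have hR : 0 < δ * ρ := by positivity
  have hsub := hball w hw
  exact harnack_ball hR (harmonicOnSet_mono hu hsub)
    (fun x hx => hpos x (hsub hx).1 (hsub hx).2) w' hd


theorem harnack_annulus (μ : ℝ) (hμ : 0 < μ) :
    ∃ K > 0, ∀ (r₁ r₂ s₁ s₂ : ℝ) (u : ℂ → ℝ),
      0 < r₁ → r₁ < s₁ → s₁ ≤ s₂ → s₂ < r₂ →
      min (Real.log (s₁ / r₁)) (Real.log (r₂ / s₂)) = μ →
      HarmonicOnSet u {z : ℂ | r₁ < ‖z‖ ∧ ‖z‖ < r₂} →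
      (∀ z : ℂ, r₁ < ‖z‖ → ‖z‖ < r₂ → 0 < u z) →
      ∀ z z' : ℂ, ‖z'‖ = ‖z‖ →
        s₁ ≤ ‖z‖ → ‖z‖ ≤ s₂ → u z' ≤ K * u z := by
  set t : ℝ := Real.exp (-μ) with htdef
  have ht0 : 0 < t := Real.exp_pos _
  have ht1 : t < 1 := by
    rw [htdef, Real.exp_lt_one_iff]
    linarith
  set δ : ℝ := (1 - t) / 2 with hδdef
  have hδ0 : 0 < δ := by rw [hδdef]; linarith
  have hδhalf : δ < 1 / 2 := by rw [hδdef]; linarith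
  set N : ℕ := ⌈8 * Real.pi / δ⌉₊ with hNdef
  have hπ : 0 < Real.pi := Real.pi_pos
  have hNpos : 0 < N := by
    rw [hNdef]
    exact Nat.ceil_pos.2 (by positivity)
  have hNge : 8 * Real.pi / δ ≤ N := Nat.le_ceil _
  refine ⟨5 ^ N, by positivity, ?_⟩
  intro r₁ r₂ s₁ s₂ u hr₁ hr₁s₁ hs₁s₂ hs₂r₂ hmin hu hpos z z' habs' hs₁ hs₂
  set ρ : ℝ := ‖z‖ with hρdef
  have hρ0 : 0 < ρ := lt_of_lt_of_le (hr₁.trans hr₁s₁) hs₁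
  -- consequences of the min hypothesis
  have hμ1 : μ ≤ Real.log (s₁ / r₁) := hmin ▸ min_le_left _ _
  have hμ2 : μ ≤ Real.log (r₂ / s₂) := hmin ▸ min_le_right _ _
  have hexp1 : r₁ * Real.exp μ ≤ s₁ := by
    have h := (Real.le_log_iff_exp_le (div_pos (by linarith) hr₁)).1 hμ1
    rw [le_div_iff₀ hr₁] at h
    linarith
  have hexp2 : s₂ * Real.exp μ ≤ r₂ := by
    have h := (Real.le_log_iff_exp_le (div_pos (by linarith) (by linarith))).1 hμ2
    rw [le_div_iff₀ (by linarith : (0:ℝ) < s₂)] at h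
    linarith
  have htE : t * Real.exp μ = 1 := by
    rw [htdef, ← Real.exp_add]
    simp
  have hE1 : 1 < Real.exp μ := by
    nlinarith
  -- ball inclusion
  have hball : ∀ w : ℂ, ‖w‖ = ρ →
      ball w (δ * ρ) ⊆ {x : ℂ | r₁ < ‖x‖ ∧ ‖x‖ < r₂} := by
    intro w hw x hx
    rw [mem_ball, Complex.dist_eq] at hx
    have hdiff : |‖x‖ - ρ| < δ * ρ := by
      have := abs_norm_sub_norm_le x w
      rw [hw] at this
      exact lt_of_le_of_lt this hx
    rw [abs_lt] at hdiff
    constructor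
    · -- r₁ < abs x
      have h1 : r₁ ≤ s₁ * t := by
        nlinarith
      have h2 : s₁ * t ≤ ρ * t := by nlinarith
      have h3 : ρ * t < ρ * (1 - δ) := by
        apply mul_lt_mul_of_pos_left _ hρ0
        rw [hδdef]; linarith
      show r₁ < ‖x‖
      nlinarith
    · -- abs x < r₂
      have h1 : ρ * (1 + δ) ≤ s₂ * (1 + δ) := by nlinarith
      have h2 : s₂ * (1 + δ) ≤ s₂ * Real.exp μ := by
        apply mul_le_mul_of_nonneg_left _ (by linarith : (0:ℝ) ≤ s₂)
        have hEt : Real.exp μ = 1 / t := by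
          rw [eq_div_iff ht0.ne']; linarith [htE]
        rw [hδdef, hEt, le_div_iff₀ ht0]
        nlinarith
      nlinarith
  -- the chain of points
  set a : ℝ := z.arg with hadef
  set a' : ℝ := z'.arg with ha'def
  set Δ : ℝ := (a' - a) / N with hΔdef
  set w : ℕ → ℂ := fun k => (ρ : ℂ) * Complex.exp (((a + k * Δ : ℝ) : ℂ) * Complex.I) with hwdef
  have habsw : ∀ k, ‖w k‖ = ρ := by
    intro k
    simp [hwdef, Complex.norm_exp, abs_of_pos hρ0]
  have hw0 : w 0 = z := by
    simp only [hwdef, Nat.cast_zero, zero_mul, add_zero]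
    rw [hρdef, hadef]
    exact Complex.norm_mul_exp_arg_mul_I z
  have hwN : w N = z' := by
    have hNne : (N : ℝ) ≠ 0 := Nat.cast_ne_zero.2 hNpos.ne'
    have : a + N * Δ = a' := by
      rw [hΔdef]; field_simp; ring
    simp only [hwdef, this]
    rw [← habs', ha'def]
    exact Complex.norm_mul_exp_arg_mul_I z'
  have hΔbound : |Δ| ≤ δ / 4 := by
    have haa : |a' - a| ≤ 2 * Real.pi := by
      have h1 : |a| ≤ Real.pi := Complex.abs_arg_le_pi z
      have h2 : |a'| ≤ Real.pi := Complex.abs_arg_le_pi z'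
      rw [abs_le] at h1 h2 ⊢
      constructor <;> linarith
    rw [hΔdef, abs_div, Nat.abs_cast]
    rw [div_le_iff₀ (by exact_mod_cast hNpos)]
    have : 8 * Real.pi / δ ≤ (N : ℝ) := hNge
    rw [div_le_iff₀ hδ0] at this
    nlinarith
  have hstep : ∀ k : ℕ, dist (w (k + 1)) (w k) ≤ δ * ρ / 2 := by
    intro k
    have hfac : w (k + 1) - w k
        = (ρ : ℂ) * Complex.exp (((a + k * Δ : ℝ) : ℂ) * Complex.I)
          * (Complex.exp ((Δ : ℂ) * Complex.I) - 1) := by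
      simp only [hwdef]
      rw [show ((a + (k+1 : ℕ) * Δ : ℝ) : ℂ) * Complex.I
          = ((a + k * Δ : ℝ) : ℂ) * Complex.I + (Δ : ℂ) * Complex.I by push_cast; ring]
      rw [Complex.exp_add]
      ring
    rw [dist_eq_norm, hfac]
    have hΔ1 : ‖(Δ : ℂ) * Complex.I‖ ≤ 1 := by
      simp only [norm_mul, Complex.norm_I, mul_one, Complex.norm_real, Real.norm_eq_abs]
      have : δ / 4 ≤ 1 := by linarith
      linarith [hΔbound]
    have hexpb : ‖Complex.exp ((Δ : ℂ) * Complex.I) - 1‖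
        ≤ 2 * ‖(Δ : ℂ) * Complex.I‖ := Complex.norm_exp_sub_one_le hΔ1
    have habs1 : ‖(ρ : ℂ) * Complex.exp (((a + k * Δ : ℝ) : ℂ) * Complex.I)‖ = ρ := by
      simp [Complex.norm_exp, abs_of_pos hρ0]
    calc ‖(ρ : ℂ) * Complex.exp (((a + k * Δ : ℝ) : ℂ) * Complex.I)
          * (Complex.exp ((Δ : ℂ) * Complex.I) - 1)‖
        = ρ * ‖Complex.exp ((Δ : ℂ) * Complex.I) - 1‖ := by
          rw [show ‖(ρ : ℂ) * Complex.exp (((a + k * Δ : ℝ) : ℂ) * Complex.I)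
            * (Complex.exp ((Δ : ℂ) * Complex.I) - 1)‖
            = ‖(ρ : ℂ) * Complex.exp (((a + k * Δ : ℝ) : ℂ) * Complex.I)
            * (Complex.exp ((Δ : ℂ) * Complex.I) - 1)‖ from rfl]
          rw [norm_mul, habs1]
    _ ≤ ρ * (2 * ‖(Δ : ℂ) * Complex.I‖) := by
          apply mul_le_mul_of_nonneg_left hexpb hρ0.le
    _ ≤ δ * ρ / 2 := by
          simp only [norm_mul, Complex.norm_I, mul_one, Complex.norm_real, Real.norm_eq_abs]
          nlinarith [hΔbound, abs_nonneg Δ]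
  -- induction along the chain
  have hchain : ∀ k : ℕ, u (w k) ≤ 5 ^ k * u (w 0) := by
    intro k
    induction k with
    | zero => simp
    | succ k ih =>
      have h5 : u (w (k + 1)) ≤ 5 * u (w k) :=
        harnack_step hδ0 hρ0 hu hpos hball (w k) (w (k + 1)) (habsw k) (habsw (k + 1))
          (hstep k)
      have hupos : 0 < u (w 0) := by
        have h := habsw 0
        apply hpos
        · rw [h]; nlinarith [hexp1, hE1]
        · rw [h]; nlinarith [hexp2, hE1]
      calc u (w (k + 1)) ≤ 5 * u (w k) := h5
      _ ≤ 5 * (5 ^ k * u (w 0)) := by linarith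
      _ = 5 ^ (k + 1) * u (w 0) := by ring
  have := hchain N
  rw [hw0, hwN] at this
  exact this
end

section
/- Let E = ⋃_{n≥0} [a_n, b_n] ⊂ (0, ∞) with 0 < a₀ < b₀ < a₁ < b₁ < ⋯, a_n → ∞, and suppose (1/n)·∑_{j=0}^{n−1} log(a_{j+1}/a_j) → ∞ as n → ∞. Then ∑_{j=0}^{n−1} log⁺(log(a_{j+1}/a_j)) = o(log a_n) as n → ∞. -/
open Filter Asymptotics

theorem logplus_sum_littleO (a b : ℕ → ℝ)
    (h0 : 0 < a 0)
    (hinter : ∀ n, a n < b n ∧ b n < a (n + 1))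
    (hlim : Tendsto a atTop atTop)
    (hcesaro : Tendsto
      (fun n => (∑ j ∈ Finset.range n, Real.log (a (j + 1) / a j)) / (n : ℝ)) atTop atTop) :
    (fun n => ∑ j ∈ Finset.range n, max (Real.log (Real.log (a (j + 1) / a j))) 0)
      =o[atTop] fun n => Real.log (a n) := by
  have hmono : ∀ n, a n < a (n + 1) := fun n => (hinter n).1.trans (hinter n).2
  have hpos : ∀ n, 0 < a n := by
    intro n
    induction n with
    | zero => exact h0
    | succ k ih => exact ih.trans (hmono k)
  -- telescoping
  set T : ℕ → ℝ := fun n => ∑ j ∈ Finset.range n, Real.log (a (j + 1) / a j) with hT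
  have hTtel : ∀ n, T n = Real.log (a n) - Real.log (a 0) := by
    intro n
    have : ∀ j, Real.log (a (j + 1) / a j) = Real.log (a (j + 1)) - Real.log (a j) := by
      intro j
      exact Real.log_div (hpos (j + 1)).ne' (hpos j).ne'
    simp only [hT, this]
    exact Finset.sum_range_sub (fun j => Real.log (a j)) n
  have htermnn : ∀ j, 0 ≤ Real.log (a (j + 1) / a j) := by
    intro j
    apply Real.log_nonneg
    rw [le_div_iff₀ (hpos j)]
    simpa using (hmono j).le
  have hTnn : ∀ n, 0 ≤ T n := fun n => Finset.sum_nonneg fun j _ => htermnn j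
  have hloga : Tendsto (fun n => Real.log (a n)) atTop atTop :=
    Real.tendsto_log_atTop.comp hlim
  rw [isLittleO_iff]
  intro c hc
  set ε : ℝ := c / 4 with hε
  have hεpos : 0 < ε := by positivity
  set C : ℝ := max (-1 - Real.log ε) 0 with hC
  have hCnn : 0 ≤ C := le_max_right _ _
  -- pointwise bound
  have hpt : ∀ t : ℝ, 0 ≤ t → max (Real.log t) 0 ≤ ε * t + C := by
    intro t ht
    rcases le_or_gt (Real.log t) 0 with h | h
    · rw [max_eq_right h]
      have : 0 ≤ ε * t := by positivity
      linarith [hCnn]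
    · rw [max_eq_left h.le]
      have ht1 : (1 : ℝ) < t := by
        by_contra hle
        push_neg at hle
        exact absurd (Real.log_nonpos ht hle) (not_le.mpr h)
      have htpos : 0 < t := lt_trans one_pos ht1
      have h1 : Real.log (ε * t) ≤ ε * t - 1 :=
        Real.log_le_sub_one_of_pos (by positivity)
      have h2 : Real.log (ε * t) = Real.log ε + Real.log t :=
        Real.log_mul hεpos.ne' htpos.ne'
      have h3 : Real.log t ≤ ε * t - 1 - Real.log ε := by linarith
      have h4 : -1 - Real.log ε ≤ C := le_max_left _ _
      linarith
  -- sum bound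
  have hsum : ∀ n, (∑ j ∈ Finset.range n,
      max (Real.log (Real.log (a (j + 1) / a j))) 0) ≤ ε * T n + C * n := by
    intro n
    calc (∑ j ∈ Finset.range n, max (Real.log (Real.log (a (j + 1) / a j))) 0)
        ≤ ∑ j ∈ Finset.range n, (ε * Real.log (a (j + 1) / a j) + C) :=
          Finset.sum_le_sum fun j _ => hpt _ (htermnn j)
      _ = ε * T n + C * n := by
          rw [Finset.sum_add_distrib, ← Finset.mul_sum]
          simp [hT, mul_comm]
  have hSnn : ∀ n, 0 ≤ (∑ j ∈ Finset.range n,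
      max (Real.log (Real.log (a (j + 1) / a j))) 0) :=
    fun n => Finset.sum_nonneg fun j _ => le_max_right _ _
  -- eventual facts
  have hev1 : ∀ᶠ n in atTop, C * n ≤ ε * T n := by
    have h := hcesaro.eventually_ge_atTop (C / ε)
    filter_upwards [h, eventually_gt_atTop 0] with n hn hn0
    have hnpos : (0 : ℝ) < n := Nat.cast_pos.mpr hn0
    rw [le_div_iff₀ hnpos] at hn
    calc C * n = ε * (C / ε * n) := by field_simp
      _ ≤ ε * T n := by
        apply mul_le_mul_of_nonneg_left hn hεpos.le
  have hTlim : Tendsto T atTop atTop := by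
    simp only [funext hTtel]
    exact hloga.atTop_add tendsto_const_nhds
  have hev2 : ∀ᶠ n in atTop, T n ≤ 2 * Real.log (a n) := by
    filter_upwards [hTlim.eventually_ge_atTop (2 * |Real.log (a 0)|)] with n hn
    have := hTtel n
    have h1 : -Real.log (a 0) ≤ |Real.log (a 0)| := neg_le_abs _
    have h2 : |Real.log (a 0)| ≤ T n / 2 := by linarith
    nlinarith
  have hev3 : ∀ᶠ n in atTop, 0 ≤ Real.log (a n) :=
    hloga.eventually_ge_atTop 0
  filter_upwards [hev1, hev2, hev3] with n h1 h2 h3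
  rw [Real.norm_eq_abs, Real.norm_eq_abs, abs_of_nonneg (hSnn n), abs_of_nonneg h3]
  calc (∑ j ∈ Finset.range n, max (Real.log (Real.log (a (j + 1) / a j))) 0)
      ≤ ε * T n + C * n := hsum n
    _ ≤ 2 * (ε * T n) := by linarith
    _ ≤ 2 * (ε * (2 * Real.log (a n))) := by
        apply mul_le_mul_of_nonneg_left _ (by norm_num)
        exact mul_le_mul_of_nonneg_left h2 hεpos.le
    _ = c * Real.log (a n) := by rw [hε]; ring
end

section
/- Define for a measurable set S ⊆ (1, ∞) the upper logarithmic density Λ̄(S) = limsup_{r→∞} (1/log r)·∫_{S ∩ (1,r)} dt/t. Let E* = ⋃_{n≥0} [a_n, b_n] with 1 ≤ a₀ < b₀ < a₁ < ⋯, a_n → ∞, and let E' = ⋃_{n≥0} [a_n/2, 2b_n]. If n = o(log a_n) as n → ∞, then Λ̄(E') = Λ̄(E*). -/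
open Filter MeasureTheory Asymptotics

/-- Upper logarithmic density of a set `S ⊆ (1,∞)`. -/
noncomputable def upperLogDensity (S : Set ℝ) : ℝ :=
  limsup (fun r => (∫ t in S ∩ Set.Ioo 1 r, 1 / t) / Real.log r) atTop

/-- The measure `dt/t` on the reals. -/
noncomputable def nuD : Measure ℝ := volume.withDensity fun t => ENNReal.ofReal (1 / t)

lemma nuD_apply {s : Set ℝ} (hs : MeasurableSet s) :
    nuD s = ∫⁻ t in s, ENNReal.ofReal (1 / t) := withDensity_apply _ hs

lemma integrableOn_one_div_Icc {c d : ℝ} (hc : 0 < c) :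
    IntegrableOn (fun t : ℝ => 1 / t) (Set.Icc c d) := by
  apply ContinuousOn.integrableOn_Icc
  apply ContinuousOn.div continuousOn_const continuousOn_id
  intro x hx
  exact ne_of_gt (lt_of_lt_of_le hc hx.1)

lemma integral_Icc_one_div {c d : ℝ} (hc : 0 < c) (hcd : c ≤ d) :
    ∫ t in Set.Icc c d, 1 / t = Real.log d - Real.log c := by
  rw [MeasureTheory.integral_Icc_eq_integral_Ioc, ← intervalIntegral.integral_of_le hcd,
    integral_one_div (Set.notMem_uIcc_of_lt hc (lt_of_lt_of_le hc hcd)),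
    Real.log_div (ne_of_gt (lt_of_lt_of_le hc hcd)) (ne_of_gt hc)]

lemma integral_Ioo_one_div {c d : ℝ} (hc : 0 < c) (hcd : c ≤ d) :
    ∫ t in Set.Ioo c d, 1 / t = Real.log d - Real.log c := by
  rw [← MeasureTheory.integral_Ioc_eq_integral_Ioo, ← intervalIntegral.integral_of_le hcd,
    integral_one_div (Set.notMem_uIcc_of_lt hc (lt_of_lt_of_le hc hcd)),
    Real.log_div (ne_of_gt (lt_of_lt_of_le hc hcd)) (ne_of_gt hc)]

lemma nuD_Icc {c d : ℝ} (hc : 0 < c) (hcd : c ≤ d) :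
    nuD (Set.Icc c d) = ENNReal.ofReal (Real.log d - Real.log c) := by
  rw [nuD_apply measurableSet_Icc,
    ← ofReal_integral_eq_lintegral_ofReal (integrableOn_one_div_Icc hc)
      (ae_restrict_of_forall_mem measurableSet_Icc fun x hx => by
        have : 0 < x := lt_of_lt_of_le hc hx.1
        positivity),
    integral_Icc_one_div hc hcd]

lemma nuD_Ioo {c d : ℝ} (hc : 0 < c) (hcd : c ≤ d) :
    nuD (Set.Ioo c d) = ENNReal.ofReal (Real.log d - Real.log c) := by
  rw [nuD_apply measurableSet_Ioo,
    ← ofReal_integral_eq_lintegral_ofReal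
      ((integrableOn_one_div_Icc hc).mono_set Set.Ioo_subset_Icc_self)
      (ae_restrict_of_forall_mem measurableSet_Ioo fun x hx => by
        have : 0 < x := lt_of_lt_of_le hc hx.1.le
        positivity),
    integral_Ioo_one_div hc hcd]

lemma setIntegral_eq_nuD {s : Set ℝ} (hs : MeasurableSet s) (h0 : s ⊆ Set.Ioi 0) :
    ∫ t in s, 1 / t = (nuD s).toReal := by
  rw [integral_eq_lintegral_of_nonneg_ae
      (ae_restrict_of_forall_mem hs fun x hx => by
        have : 0 < x := h0 hx
        positivity)
      ((show Measurable fun t : ℝ => 1 / t from measurable_const.div measurable_id).aestronglyMeasurable),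
    nuD_apply hs]

theorem upperLogDensity_thickened (a b : ℕ → ℝ)
    (h0 : 1 ≤ a 0)
    (hinter : ∀ n, a n < b n ∧ b n < a (n + 1))
    (hlim : Tendsto a atTop atTop)
    (hno : (fun n : ℕ => (n : ℝ)) =o[atTop] fun n : ℕ => Real.log (a n)) :
    upperLogDensity (⋃ n, Set.Icc (a n / 2) (2 * b n)) =
      upperLogDensity (⋃ n, Set.Icc (a n) (b n)) := by
  have hab : ∀ n, a n < b n := fun n => (hinter n).1
  have hba : ∀ n, b n < a (n + 1) := fun n => (hinter n).2
  have hmono : StrictMono a := strictMono_nat_of_lt_succ fun n => (hab n).trans (hba n)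
  have ha1 : ∀ n, 1 ≤ a n := fun n => le_trans h0 (hmono.monotone (Nat.zero_le n))
  have hb1 : ∀ n, 1 ≤ b n := fun n => (ha1 n).trans (hab n).le
  set E : Set ℝ := ⋃ n, Set.Icc (a n) (b n) with hE
  set E' : Set ℝ := ⋃ n, Set.Icc (a n / 2) (2 * b n) with hE'
  have measE : MeasurableSet E := MeasurableSet.iUnion fun n => measurableSet_Icc
  have measE' : MeasurableSet E' := MeasurableSet.iUnion fun n => measurableSet_Icc
  have hEsub : E ⊆ E' := Set.iUnion_mono fun n =>
    Set.Icc_subset_Icc (by linarith [ha1 n]) (by linarith [hb1 n])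
  -- rewrite the density via the measure nuD
  have hrepr : ∀ S : Set ℝ, MeasurableSet S → upperLogDensity S =
      limsup (fun r => (nuD (S ∩ Set.Ioo 1 r)).toReal / Real.log r) atTop := by
    intro S hS
    unfold upperLogDensity
    congr 1
    funext r
    rw [setIntegral_eq_nuD (hS.inter measurableSet_Ioo)
      (fun x hx => lt_trans one_pos hx.2.1)]
  rw [hrepr E' measE', hrepr E measE]
  set u : ℝ → ℝ := fun r => (nuD (E ∩ Set.Ioo 1 r)).toReal / Real.log r with hu
  set u' : ℝ → ℝ := fun r => (nuD (E' ∩ Set.Ioo 1 r)).toReal / Real.log r with hu'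
  -- basic bounds
  have hleIoo : ∀ (S : Set ℝ) (r : ℝ), 1 < r →
      nuD (S ∩ Set.Ioo 1 r) ≤ ENNReal.ofReal (Real.log r) := by
    intro S r hr
    calc nuD (S ∩ Set.Ioo 1 r) ≤ nuD (Set.Ioo 1 r) := measure_mono Set.inter_subset_right
      _ = ENNReal.ofReal (Real.log r - Real.log 1) := nuD_Ioo one_pos hr.le
      _ = ENNReal.ofReal (Real.log r) := by rw [Real.log_one, sub_zero]
  have hfin : ∀ (S : Set ℝ) (r : ℝ), 1 < r → nuD (S ∩ Set.Ioo 1 r) ≠ ⊤ := fun S r hr =>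
    ne_top_of_le_ne_top ENNReal.ofReal_ne_top (hleIoo S r hr)
  have hub : ∀ᶠ r in atTop, u r ≤ 1 := by
    filter_upwards [eventually_gt_atTop (1 : ℝ)] with r hr
    have hlr : 0 < Real.log r := Real.log_pos hr
    rw [hu, div_le_one hlr]
    exact ENNReal.toReal_le_of_le_ofReal hlr.le (hleIoo E r hr)
  have hub' : ∀ᶠ r in atTop, u' r ≤ 1 := by
    filter_upwards [eventually_gt_atTop (1 : ℝ)] with r hr
    have hlr : 0 < Real.log r := Real.log_pos hr
    rw [hu', div_le_one hlr]
    exact ENNReal.toReal_le_of_le_ofReal hlr.le (hleIoo E' r hr)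
  have hlb : ∀ᶠ r in atTop, (0 : ℝ) ≤ u r := by
    filter_upwards [eventually_gt_atTop (1 : ℝ)] with r hr
    exact div_nonneg ENNReal.toReal_nonneg (Real.log_pos hr).le
  have hlb' : ∀ᶠ r in atTop, (0 : ℝ) ≤ u' r := by
    filter_upwards [eventually_gt_atTop (1 : ℝ)] with r hr
    exact div_nonneg ENNReal.toReal_nonneg (Real.log_pos hr).le
  have hBU : IsBoundedUnder (· ≤ ·) atTop u := isBoundedUnder_of_eventually_le hub
  have hBU' : IsBoundedUnder (· ≤ ·) atTop u' := isBoundedUnder_of_eventually_le hub'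
  have hCB : IsCoboundedUnder (· ≤ ·) atTop u :=
    isCoboundedUnder_le_of_eventually_le atTop hlb
  have hCB' : IsCoboundedUnder (· ≤ ·) atTop u' :=
    isCoboundedUnder_le_of_eventually_le atTop hlb'
  have hl2 : (0 : ℝ) < Real.log 2 := Real.log_pos one_lt_two
  -- the key estimate
  have hQ : ∀ ε : ℝ, 0 < ε → ∀ᶠ r in atTop, u' r ≤ u r + ε := by
    intro ε hε
    set δ : ℝ := ε / (4 * Real.log 2) with hδdef
    have hδ : 0 < δ := by positivity
    have h₁ : ∀ᶠ n : ℕ in atTop, (n : ℝ) ≤ δ / 2 * Real.log (a n) := by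
      filter_upwards [hno.bound (show (0:ℝ) < δ / 2 by positivity)] with n hn
      rwa [Real.norm_eq_abs, Real.norm_eq_abs, abs_of_nonneg (Nat.cast_nonneg n),
        abs_of_nonneg (Real.log_nonneg (ha1 n))] at hn
    have h₂ : ∀ᶠ n : ℕ in atTop, (1 : ℝ) ≤ δ / 2 * Real.log (a n) := by
      filter_upwards [(Real.tendsto_log_atTop.comp hlim).eventually_ge_atTop (2 / δ)] with n hn
      have h2δ : δ / 2 * (2 / δ) = 1 := by field_simp
      calc (1:ℝ) = δ / 2 * (2 / δ) := h2δ.symm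
        _ ≤ δ / 2 * Real.log (a n) := by
            apply mul_le_mul_of_nonneg_left hn (by positivity)
    obtain ⟨n₁, hn₁⟩ := eventually_atTop.mp (h₁.and h₂)
    have hkey : ∀ n, n₁ ≤ n → (n : ℝ) + 1 ≤ δ * Real.log (a n) := by
      intro n hn
      have h := hn₁ n hn
      linarith [h.1, h.2]
    have ev2 : ∀ᶠ r in atTop, 2 * ((n₁ : ℝ) + 1) * Real.log 2 ≤ ε * Real.log r := by
      filter_upwards [Real.tendsto_log_atTop.eventually_ge_atTop
        (2 * ((n₁ : ℝ) + 1) * Real.log 2 / ε)] with r hr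
      rw [div_le_iff₀ hε] at hr
      linarith [hr]
    filter_upwards [eventually_ge_atTop (2 : ℝ), ev2] with r hr2 hrε
    have hr1 : (1 : ℝ) < r := lt_of_lt_of_le one_lt_two hr2
    have hr0 : (0 : ℝ) < r := lt_trans one_pos hr1
    have hlr : 0 < Real.log r := Real.log_pos hr1
    have hl2r : Real.log 2 ≤ Real.log r := Real.log_le_log two_pos hr2
    -- choose N
    obtain ⟨m, hm⟩ := (hlim.eventually_ge_atTop (2 * r)).exists
    have hP : ∃ k, 2 * r ≤ a (k + 1) := ⟨m, le_trans hm (hmono.monotone (Nat.le_succ m))⟩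
    set N : ℕ := Nat.find hP with hNdef
    have hN1 : 2 * r ≤ a (N + 1) := Nat.find_spec hP
    have hNmax : ∀ n, a n < 2 * r → n ≤ N := by
      intro n hn
      by_contra h
      push_neg at h
      exact absurd (le_trans hN1 (hmono.monotone h)) (not_le.mpr hn)
    -- bound on N
    have hB : 2 * ((N : ℝ) + 1) * Real.log 2 ≤ ε * Real.log r := by
      rcases le_or_gt N n₁ with h | h
      · have hNn : (N : ℝ) ≤ (n₁ : ℝ) := Nat.cast_le.mpr h
        nlinarith
      · have hNpos : 0 < N := lt_of_le_of_lt (Nat.zero_le _) h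
        have haN : a N < 2 * r := by
          have hmin := Nat.find_min hP (show N - 1 < N from Nat.sub_lt hNpos one_pos)
          rw [Nat.sub_add_cancel hNpos] at hmin
          exact not_le.mp hmin
        have h3 : (N : ℝ) + 1 ≤ δ * Real.log (a N) := hkey N h.le
        have h4 : Real.log (a N) ≤ Real.log 2 + Real.log r := by
          have := Real.log_le_log (lt_of_lt_of_le one_pos (ha1 N)) haN.le
          rwa [Real.log_mul two_ne_zero hr0.ne'] at this
        have e1 := mul_le_mul_of_nonneg_left h4 hδ.le
        have h6 : (N : ℝ) + 1 ≤ δ * (2 * Real.log r) := by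
          have e2 : δ * (Real.log 2 + Real.log r) ≤ δ * (2 * Real.log r) :=
            mul_le_mul_of_nonneg_left (by linarith) hδ.le
          linarith
        have e3 := mul_le_mul_of_nonneg_left h6 (show (0:ℝ) ≤ 2 * Real.log 2 by positivity)
        have e4 : 2 * Real.log 2 * (δ * (2 * Real.log r)) = ε * Real.log r := by
          rw [hδdef]
          field_simp
          ring
        linarith
    -- inclusion
    have hsub : E' ∩ Set.Ioo 1 r ⊆ (E ∩ Set.Ioo 1 r) ∪
        ⋃ n ∈ Finset.range (N + 1), (Set.Icc (a n / 2) (a n) ∪ Set.Icc (b n) (2 * b n)) := by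
      rintro x ⟨hx1, hx2⟩
      rw [hE', Set.mem_iUnion] at hx1
      obtain ⟨n, hn⟩ := hx1
      have hnN : n ∈ Finset.range (N + 1) := by
        refine Finset.mem_range.mpr (Nat.lt_succ_of_le (hNmax n ?_))
        have h1 := hn.1
        have h2 := hx2.2
        linarith
      rcases le_or_gt x (a n) with hxa | hxa
      · exact Or.inr (Set.mem_iUnion₂.mpr ⟨n, hnN, Or.inl ⟨hn.1, hxa⟩⟩)
      rcases le_or_gt x (b n) with hxb | hxb
      · exact Or.inl ⟨Set.mem_iUnion.mpr ⟨n, hxa.le, hxb⟩, hx2⟩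
      · exact Or.inr (Set.mem_iUnion₂.mpr ⟨n, hnN, Or.inr ⟨hxb.le, hn.2⟩⟩)
    -- measure estimate
    have hIcc1 : ∀ n : ℕ, nuD (Set.Icc (a n / 2) (a n)) = ENNReal.ofReal (Real.log 2) := by
      intro n
      have hpos : 0 < a n := lt_of_lt_of_le one_pos (ha1 n)
      rw [nuD_Icc (by positivity) (by linarith), Real.log_div hpos.ne' two_ne_zero]
      congr 1
      ring
    have hIcc2 : ∀ n : ℕ, nuD (Set.Icc (b n) (2 * b n)) = ENNReal.ofReal (Real.log 2) := by
      intro n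
      have hpos : 0 < b n := lt_of_lt_of_le one_pos (hb1 n)
      rw [nuD_Icc hpos (by linarith), Real.log_mul two_ne_zero hpos.ne']
      congr 1
      ring
    have hmeas : nuD (E' ∩ Set.Ioo 1 r) ≤ nuD (E ∩ Set.Ioo 1 r) +
        ENNReal.ofReal (((N : ℝ) + 1) * (2 * Real.log 2)) := by
      calc nuD (E' ∩ Set.Ioo 1 r) ≤ nuD ((E ∩ Set.Ioo 1 r) ∪
            ⋃ n ∈ Finset.range (N + 1), (Set.Icc (a n / 2) (a n) ∪ Set.Icc (b n) (2 * b n))) :=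
          measure_mono hsub
        _ ≤ nuD (E ∩ Set.Ioo 1 r) + nuD (⋃ n ∈ Finset.range (N + 1),
              (Set.Icc (a n / 2) (a n) ∪ Set.Icc (b n) (2 * b n))) := measure_union_le _ _
        _ ≤ nuD (E ∩ Set.Ioo 1 r) + ∑ n ∈ Finset.range (N + 1),
              nuD (Set.Icc (a n / 2) (a n) ∪ Set.Icc (b n) (2 * b n)) := by
            exact add_le_add_right (measure_biUnion_finset_le _ _) _
        _ ≤ nuD (E ∩ Set.Ioo 1 r) + ∑ n ∈ Finset.range (N + 1),
              ENNReal.ofReal (2 * Real.log 2) := by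
            refine add_le_add_right (Finset.sum_le_sum fun n _ => ?_) _
            calc nuD (Set.Icc (a n / 2) (a n) ∪ Set.Icc (b n) (2 * b n))
                ≤ nuD (Set.Icc (a n / 2) (a n)) + nuD (Set.Icc (b n) (2 * b n)) :=
                  measure_union_le _ _
              _ = ENNReal.ofReal (Real.log 2) + ENNReal.ofReal (Real.log 2) := by
                  rw [hIcc1, hIcc2]
              _ = ENNReal.ofReal (2 * Real.log 2) := by
                  rw [← ENNReal.ofReal_add hl2.le hl2.le]
                  congr 1
                  ring
        _ = nuD (E ∩ Set.Ioo 1 r) + ENNReal.ofReal (((N : ℝ) + 1) * (2 * Real.log 2)) := by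
            rw [Finset.sum_const, Finset.card_range, nsmul_eq_mul]
            congr 1
            rw [← ENNReal.ofReal_natCast (N + 1), ← ENNReal.ofReal_mul (by positivity)]
            congr 1
            push_cast
            ring
    -- pass to real numbers
    have hfinE : nuD (E ∩ Set.Ioo 1 r) ≠ ⊤ := hfin E r hr1
    have hreal : (nuD (E' ∩ Set.Ioo 1 r)).toReal ≤
        (nuD (E ∩ Set.Ioo 1 r)).toReal + ((N : ℝ) + 1) * (2 * Real.log 2) := by
      have h := ENNReal.toReal_mono
        (ENNReal.add_ne_top.mpr ⟨hfinE, ENNReal.ofReal_ne_top⟩) hmeas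
      rwa [ENNReal.toReal_add hfinE ENNReal.ofReal_ne_top,
        ENNReal.toReal_ofReal (by positivity)] at h
    have hreal2 : (nuD (E' ∩ Set.Ioo 1 r)).toReal ≤
        (nuD (E ∩ Set.Ioo 1 r)).toReal + ε * Real.log r := by nlinarith
    rw [hu', hu]
    rw [div_le_iff₀ hlr]
    rw [add_mul, div_mul_cancel₀ _ hlr.ne']
    linarith
  -- pointwise monotonicity
  have hmono_ev : u ≤ᶠ[atTop] u' := by
    filter_upwards [eventually_gt_atTop (1 : ℝ)] with r hr
    have hlr : 0 < Real.log r := Real.log_pos hr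
    refine div_le_div_of_nonneg_right ?_ hlr.le
    exact ENNReal.toReal_mono (hfin E' r hr)
      (measure_mono (Set.inter_subset_inter_left _ hEsub))
  apply le_antisymm
  · -- limsup u' ≤ limsup u
    apply le_of_forall_pos_le_add
    intro ε hε
    have hq := hQ (ε / 2) (half_pos hε)
    have h1 : ∀ᶠ r in atTop, u r < limsup u atTop + ε / 2 :=
      eventually_lt_of_limsup_lt (by linarith) hBU
    have h2 : ∀ᶠ r in atTop, u' r ≤ limsup u atTop + ε := by
      filter_upwards [hq, h1] with r hqr h1r
      linarith
    exact limsup_le_of_le hCB' h2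
  · exact limsup_le_limsup hmono_ev hCB hBU'
end
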